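/- Let K be a field of characteristic zero and let f be a K-algebra endomorphism of K[x,y] with Jac(P,Q) a nonzero element of K, where P = f(x), Q = f(y). If P is symmetric with respect to the exchange involution α (α(P) = P) and Q is skew-symmetric with respect to α (α(Q) = −Q), then f is a K-algebra automorphism of K[x,y]. -/

import Mathlib

open MvPolynomial

/-- The Jacobian of two polynomials in `K[x,y]` (variables indexed by `Fin 2`). -/
noncomputable def Jac {K : Type*} [CommRing K]
    (P Q : MvPolynomial (Fin 2) K) : MvPolynomial (Fin 2) K :=
  pderiv 0 P * pderiv 1 Q - pderiv 1 P * pderiv 0 Q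

/-- The exchange involution `α` on `K[x,y]`, swapping the two variables. -/
noncomputable def exch (K : Type*) [CommSemiring K] :
    MvPolynomial (Fin 2) K ≃ₐ[K] MvPolynomial (Fin 2) K :=
  MvPolynomial.renameEquiv K (Equiv.swap 0 1)

/-- An involution on a `K`-algebra: an algebra automorphism of order 2. -/
def IsInvolution {K R : Type*} [CommSemiring K] [Semiring R] [Algebra K R]
    (γ : R ≃ₐ[K] R) : Prop :=
  (∀ p, γ (γ p) = p) ∧ γ ≠ AlgEquiv.refl


set_option linter.unusedSectionVars false
set_option linter.unusedVariables false
set_option maxHeartbeats 1600000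

open MvPolynomial Finsupp

namespace S15

variable {K : Type*} [Field K] [CharZero K]

local notation "R" => MvPolynomial (Fin 2) K



noncomputable def fm (a b : ℕ) : Fin 2 →₀ ℕ := Finsupp.single 0 a + Finsupp.single 1 b

@[simp] lemma fm_apply0 (a b : ℕ) : fm a b 0 = a := by
  simp [fm, Finsupp.add_apply, Finsupp.single_apply]

@[simp] lemma fm_apply1 (a b : ℕ) : fm a b 1 = b := by
  simp [fm, Finsupp.add_apply, Finsupp.single_apply]

lemma eq_fm (m : Fin 2 →₀ ℕ) : m = fm (m 0) (m 1) := by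
  ext i; fin_cases i <;> simp

lemma fm_eq_iff {a b c d : ℕ} : fm a b = fm c d ↔ a = c ∧ b = d := by
  constructor
  · intro h
    exact ⟨by simpa using congrArg (fun m => m 0) h, by simpa using congrArg (fun m => m 1) h⟩
  · rintro ⟨rfl, rfl⟩; rfl

lemma single0_eq_fm : (Finsupp.single (0 : Fin 2) 1) = fm 1 0 := by
  ext i; fin_cases i <;> simp

lemma single1_eq_fm : (Finsupp.single (1 : Fin 2) 1) = fm 0 1 := by
  ext i; fin_cases i <;> simp

lemma fm_zero : fm 0 0 = 0 := by ext i; fin_cases i <;> simp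

lemma fm_add (a b c d : ℕ) : fm a b + fm c d = fm (a + c) (b + d) := by
  ext i; fin_cases i <;> simp [Finsupp.add_apply]

lemma add_single0 (u : Fin 2 →₀ ℕ) : u + Finsupp.single 0 1 = fm (u 0 + 1) (u 1) := by
  ext i; fin_cases i <;> simp [Finsupp.add_apply, Finsupp.single_apply]

lemma add_single1 (u : Fin 2 →₀ ℕ) : u + Finsupp.single 1 1 = fm (u 0) (u 1 + 1) := by
  ext i; fin_cases i <;> simp [Finsupp.add_apply, Finsupp.single_apply]

lemma fm_add_single0 (a b : ℕ) : fm a b + Finsupp.single 0 1 = fm (a + 1) b := by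
  rw [add_single0]; simp

lemma fm_add_single1 (a b : ℕ) : fm a b + Finsupp.single 1 1 = fm a (b + 1) := by
  rw [add_single1]; simp

lemma antid_comp {M : Fin 2 →₀ ℕ} {x : (Fin 2 →₀ ℕ) × (Fin 2 →₀ ℕ)}
    (hx : x ∈ Finset.HasAntidiagonal.antidiagonal M) : x.1 0 + x.2 0 = M 0 ∧ x.1 1 + x.2 1 = M 1 := by
  have h := Finset.HasAntidiagonal.mem_antidiagonal.mp hx
  constructor
  · have := congrArg (fun m => m 0) h
    simpa [Finsupp.add_apply] using this
  · have := congrArg (fun m => m 1) h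
    simpa [Finsupp.add_apply] using this

lemma fm_ne_zero_of_fst {a b : ℕ} (ha : a ≠ 0) : (0 : Fin 2 →₀ ℕ) ≠ fm a b := by
  intro h
  have := congrArg (fun m => m 1) h
  have h0 := congrArg (fun m => m 0) h
  simp at h0
  exact ha h0.symm

lemma fm_ne_zero_of_snd' {a b : ℕ} (hb : b ≠ 0) : (0 : Fin 2 →₀ ℕ) ≠ fm a b := by
  intro h
  have h1 := congrArg (fun m => m 1) h
  simp at h1
  exact hb h1.symm





lemma coeff_pderiv (i : Fin 2) (p : R) (n : Fin 2 →₀ ℕ) :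
    coeff n (pderiv i p) = ((n i + 1 : ℕ) : K) * coeff (n + Finsupp.single i 1) p := by
  induction p using MvPolynomial.induction_on' with
  | add p q hp hq => simp [hp, hq, mul_add]
  | monomial m a =>
    rw [pderiv_monomial]
    by_cases h : m = n + Finsupp.single i 1
    · subst h
      have h1 : (n + Finsupp.single i 1) - (Finsupp.single i 1) = n :=
        add_tsub_cancel_right n _
      have h2 : ((n + Finsupp.single i 1 : Fin 2 →₀ ℕ)) i = n i + 1 := by
        rw [Finsupp.add_apply n (Finsupp.single i 1) i, Finsupp.single_eq_same]
      rw [h1, h2, coeff_monomial, coeff_monomial]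
      simp [mul_comm]
    · rw [coeff_monomial, coeff_monomial, if_neg h]
      by_cases hmi : m i = 0
      · have : (m i : K) = 0 := by rw [hmi]; simp
        rw [this, mul_zero]
        simp
      · have : ¬ (m - Finsupp.single i 1 = n) := by
          intro he
          apply h
          ext j
          have hj := congrArg (fun f => f j) he
          simp only [Finsupp.tsub_apply, Finsupp.single_apply, Finsupp.add_apply] at hj ⊢
          by_cases hji : j = i
          · subst hji; simp at hj ⊢; omega
          · simp [Ne.symm hji] at hj ⊢
            omega
        rw [if_neg this, mul_zero]

lemma coeff_pp01 (P Q : R) (M : Fin 2 →₀ ℕ) :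
    coeff M (pderiv 0 P * pderiv 1 Q) =
      ∑ x ∈ Finset.HasAntidiagonal.antidiagonal M,
        ((x.1 0 + 1 : ℕ) : K) * ((x.2 1 + 1 : ℕ) : K) *
          coeff (x.1 + Finsupp.single 0 1) P * coeff (x.2 + Finsupp.single 1 1) Q := by
  rw [coeff_mul]
  refine Finset.sum_congr rfl fun x _ => ?_
  rw [coeff_pderiv, coeff_pderiv]
  ring

lemma coeff_pp10 (P Q : R) (M : Fin 2 →₀ ℕ) :
    coeff M (pderiv 1 P * pderiv 0 Q) =
      ∑ x ∈ Finset.HasAntidiagonal.antidiagonal M,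
        ((x.1 1 + 1 : ℕ) : K) * ((x.2 0 + 1 : ℕ) : K) *
          coeff (x.1 + Finsupp.single 1 1) P * coeff (x.2 + Finsupp.single 0 1) Q := by
  rw [coeff_mul]
  refine Finset.sum_congr rfl fun x _ => ?_
  rw [coeff_pderiv, coeff_pderiv]
  ring

lemma HW_lemma (P Q : R) (c lam : K) (hlam : lam ≠ 0)
    (hJ : pderiv 0 P * pderiv 1 Q - pderiv 1 P * pderiv 0 Q = C c)
    (hPev : ∀ m : Fin 2 →₀ ℕ, ¬ Even (m 1) → coeff m P = 0)
    (hQod : ∀ m : Fin 2 →₀ ℕ, ¬ Odd (m 1) → coeff m Q = 0)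
    (hP10 : coeff (fm 1 0) P = lam)
    (s t : ℕ) (ht : 1 ≤ t)
    (HV : ∀ m ∈ P.support, 2*t*(m 0) ≤ 2*t + s*(m 1)) :
    ∀ k d : ℕ, s*k < t*d → coeff (fm d (2*k+1)) Q = 0 := by
  intro k
  induction k using Nat.strong_induction_on with
  | _ k IH =>
  intro d hd
  have hd1 : 1 ≤ d := by
    rcases Nat.eq_zero_or_pos d with h | h
    · rw [h, Nat.mul_zero] at hd; omega
    · exact h
  have hcoe := congrArg (coeff (fm d (2*k))) hJ
  rw [coeff_sub, coeff_pp01, coeff_pp10, coeff_C,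
    if_neg (fm_ne_zero_of_fst (by omega : d ≠ 0))] at hcoe
  have hs1 : (∑ x ∈ Finset.HasAntidiagonal.antidiagonal (fm d (2*k)),
      ((x.1 0 + 1 : ℕ) : K) * ((x.2 1 + 1 : ℕ) : K) *
        coeff (x.1 + Finsupp.single 0 1) P * coeff (x.2 + Finsupp.single 1 1) Q)
      = ((2*k+1 : ℕ) : K) * lam * coeff (fm d (2*k+1)) Q := by
    rw [Finset.sum_eq_single_of_mem ((0 : Fin 2 →₀ ℕ), fm d (2*k))
      (Finset.HasAntidiagonal.mem_antidiagonal.mpr (zero_add _))]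
    · rw [zero_add, single0_eq_fm, hP10, fm_add_single1]
      simp only [Finsupp.coe_zero, Pi.zero_apply, fm_apply1]
      push_cast
      ring
    · rintro ⟨u, v⟩ hx hne
      by_contra hterm
      have hPC : coeff (u + Finsupp.single 0 1) P ≠ 0 := by
        intro h0; apply hterm; rw [h0]; ring
      have hQC : coeff (v + Finsupp.single 1 1) Q ≠ 0 := by
        intro h0; apply hterm; rw [h0]; ring
      obtain ⟨hc0, hc1⟩ := antid_comp hx
      simp only [fm_apply0, fm_apply1] at hc0 hc1
      rw [add_single0] at hPC
      rw [add_single1] at hQC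
      have hPs : fm (u 0 + 1) (u 1) ∈ P.support := MvPolynomial.mem_support_iff.mpr hPC
      have hEu : Even (u 1) := by
        by_contra hodd
        exact hPC (hPev _ (by simpa using hodd))
      have hOv : Odd (v 1 + 1) := by
        by_contra hev
        exact hQC (hQod _ (by simpa using hev))
      have hVu := HV _ hPs
      simp only [fm_apply0, fm_apply1] at hVu
      have hVu2 : 2*(t*(u 0)) ≤ s*(u 1) := by
        have e : 2*t*(u 0 + 1) = 2*(t*(u 0)) + 2*t := by ring
        omega
      obtain ⟨j, hj⟩ := hEu
      rcases Nat.eq_zero_or_pos j with hj0 | hj1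
      · -- u = 0, v = M : contradiction with hne
        have hu1 : u 1 = 0 := by omega
        have hu0 : u 0 = 0 := by
          have hsu : s * (u 1) = 0 := by rw [hu1, Nat.mul_zero]
          have h2 : 2*(t*(u 0)) = 0 := by omega
          have := Nat.mul_eq_zero.mp (by omega : t*(u 0) = 0)
          omega
        apply hne
        have hu : u = 0 := by
          rw [eq_fm u, hu0, hu1, fm_zero]
        have hv : v = fm d (2*k) := by
          have := Finset.HasAntidiagonal.mem_antidiagonal.mp hx
          rwa [hu, zero_add] at this
        rw [hu, hv]
      · -- main case : contradiction with degrees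
        have hEv : Even (v 1) := by
          rcases Nat.even_or_odd (v 1) with h | h
          · exact h
          · exfalso
            rw [Nat.odd_iff] at h
            rw [Nat.odd_iff] at hOv
            omega
        obtain ⟨k', hk'⟩ := hEv
        have hk'k : k' < k := by omega
        have hIH : t*(v 0) ≤ s*k' := by
          by_contra hlt
          push_neg at hlt
          apply hQC
          rw [show v 1 + 1 = 2*k' + 1 by omega]
          exact IH k' hk'k (v 0) hlt
        -- sum up
        have hb1 : s*(u 1) = 2*(s*j) := by rw [show u 1 = 2*j by omega]; ring
        have hsjk : s*j + s*k' = s*k := by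
          have h1 : s*(j + k') = s*j + s*k' := Nat.mul_add s j k'
          rw [show j + k' = k by omega] at h1
          omega
        have htd : t*(u 0) + t*(v 0) = t*d := by
          have h1 : t*(u 0 + v 0) = t*(u 0) + t*(v 0) := Nat.mul_add t _ _
          rw [hc0] at h1
          omega
        omega
  have hs2 : (∑ x ∈ Finset.HasAntidiagonal.antidiagonal (fm d (2*k)),
      ((x.1 1 + 1 : ℕ) : K) * ((x.2 0 + 1 : ℕ) : K) *
        coeff (x.1 + Finsupp.single 1 1) P * coeff (x.2 + Finsupp.single 0 1) Q) = 0 := by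
    refine Finset.sum_eq_zero ?_
    rintro ⟨u, v⟩ hx
    by_contra hterm
    have hPC : coeff (u + Finsupp.single 1 1) P ≠ 0 := by
      intro h0; apply hterm; rw [h0]; ring
    have hQC : coeff (v + Finsupp.single 0 1) Q ≠ 0 := by
      intro h0; apply hterm; rw [h0]; ring
    obtain ⟨hc0, hc1⟩ := antid_comp hx
    simp only [fm_apply0, fm_apply1] at hc0 hc1
    rw [add_single1] at hPC
    rw [add_single0] at hQC
    have hPs : fm (u 0) (u 1 + 1) ∈ P.support := MvPolynomial.mem_support_iff.mpr hPC
    have hEu : Even (u 1 + 1) := by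
      by_contra hodd
      exact hPC (hPev _ (by simpa using hodd))
    have hOv : Odd (v 1) := by
      by_contra hev
      exact hQC (hQod _ (by simpa using hev))
    obtain ⟨j1, hj1⟩ : ∃ j1, u 1 = 2*j1 + 1 := by
      have h2 := Nat.even_add_one.mp hEu
      rw [Nat.not_even_iff] at h2
      exact ⟨u 1 / 2, by omega⟩
    obtain ⟨k', hk'⟩ := hOv
    have hk'k : k' < k := by omega
    have hVu := HV _ hPs
    simp only [fm_apply0, fm_apply1] at hVu
    have hIH : t*(v 0 + 1) ≤ s*k' := by
      by_contra hlt
      push_neg at hlt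
      apply hQC
      rw [show v 1 = 2*k' + 1 by omega]
      exact IH k' hk'k (v 0 + 1) hlt
    have hVu2 : t*(u 0) ≤ t + s*(j1+1) := by
      have e1 : 2*t*(u 0) = 2*(t*(u 0)) := by ring
      have e2 : s*(u 1 + 1) = 2*(s*(j1+1)) := by rw [show u 1 + 1 = 2*(j1+1) by omega]; ring
      omega
    have hsjk : s*(j1+1) + s*k' = s*k := by
      have h1 : s*((j1+1) + k') = s*(j1+1) + s*k' := Nat.mul_add s _ _
      rw [show (j1+1) + k' = k by omega] at h1
      omega
    have htd : t*(u 0) + t*(v 0) = t*d := by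
      have h1 : t*(u 0 + v 0) = t*(u 0) + t*(v 0) := Nat.mul_add t _ _
      rw [hc0] at h1
      omega
    have htv : t*(v 0 + 1) = t*(v 0) + t := by ring
    omega
  rw [hs1, hs2, sub_zero] at hcoe
  have hcast : ((2*k+1 : ℕ) : K) ≠ 0 := Nat.cast_ne_zero.mpr (by omega)
  have := mul_eq_zero.mp hcoe
  rcases this with h | h
  · rcases mul_eq_zero.mp h with h' | h'
    · exact absurd h' hcast
    · exact absurd h' hlam
  · exact h




lemma sum_le_totalDegree {A : MvPolynomial (Fin 2) K} {m : Fin 2 →₀ ℕ} (hm : m ∈ A.support) :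
    m 0 + m 1 ≤ A.totalDegree := by
  have h := MvPolynomial.le_totalDegree hm
  rwa [Finsupp.sum_fintype _ _ (fun i => rfl), Fin.sum_univ_two] at h

lemma no_bad (P Q : MvPolynomial (Fin 2) K) (c lam eps : K) (hc : c ≠ 0)
    (hlam : lam ≠ 0) (heps : eps ≠ 0)
    (hJ : pderiv 0 P * pderiv 1 Q - pderiv 1 P * pderiv 0 Q = C c)
    (hPev : ∀ m : Fin 2 →₀ ℕ, ¬ Even (m 1) → coeff m P = 0)
    (hQod : ∀ m : Fin 2 →₀ ℕ, ¬ Odd (m 1) → coeff m Q = 0)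
    (hP10 : coeff (fm 1 0) P = lam)
    (hPa0 : ∀ a, coeff (fm (a + 2) 0) P = 0)
    (hQ01 : coeff (fm 0 1) Q = eps)
    (hQb1 : ∀ b, coeff (fm (b + 1) 1) Q = 0) :
    ∀ m ∈ P.support, 1 ≤ m 0 → m 1 = 0 := by
  by_contra hbad
  push_neg at hbad
  obtain ⟨m₀, hm₀s, hm₀0, hm₀1⟩ := hbad
  classical
  set Bad := P.support.filter (fun m => 1 ≤ m 0 ∧ 1 ≤ m 1) with hBad
  have hBadNE : Bad.Nonempty :=
    ⟨m₀, Finset.mem_filter.mpr ⟨hm₀s, hm₀0, by omega⟩⟩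
  obtain ⟨mh, hmhB, hmhmax⟩ :=
    Finset.exists_max_image Bad (fun m => ((m 0 : ℚ) - 1) / (m 1)) hBadNE
  obtain ⟨hmhs, hmh0, hmh1⟩ := Finset.mem_filter.mp hmhB
  have hmhev : Even (mh 1) := by
    by_contra hodd
    exact (MvPolynomial.mem_support_iff.mp hmhs) (hPev mh hodd)
  obtain ⟨kh0, hkh0⟩ := hmhev
  set kh := kh0 with hkhdef
  have hkh : mh 1 = 2 * kh := by omega
  have hkh1 : 1 ≤ kh := by omega
  set s0 := mh 0 - 1 with hs0
  set g := Nat.gcd s0 kh with hgdef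
  have hg : 1 ≤ g := Nat.gcd_pos_of_pos_right _ (by omega)
  set s := s0 / g with hsdef
  set t := kh / g with htdef
  have hsg : s * g = s0 := Nat.div_mul_cancel (Nat.gcd_dvd_left _ _)
  have htg : t * g = kh := Nat.div_mul_cancel (Nat.gcd_dvd_right _ _)
  have ht : 1 ≤ t := by
    rcases Nat.eq_zero_or_pos t with h | h
    · rw [h, Nat.zero_mul] at htg; omega
    · exact h
  have hst : Nat.Coprime s t := Nat.coprime_div_gcd_div_gcd (by omega)
  -- cross-multiplied maximality
  have hcross : ∀ m ∈ P.support, 1 ≤ m 0 → 1 ≤ m 1 → (m 0 - 1) * mh 1 ≤ s0 * m 1 := by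
    intro m hm h0 h1
    have hq := hmhmax m (Finset.mem_filter.mpr ⟨hm, h0, h1⟩)
    rw [div_le_div_iff₀ (by exact_mod_cast h1) (by exact_mod_cast hmh1)] at hq
    have hcast1 : ((m 0 : ℚ) - 1) = ((m 0 - 1 : ℕ) : ℚ) := by
      rw [Nat.cast_sub h0]; norm_num
    have hcast2 : ((mh 0 : ℚ) - 1) = ((s0 : ℕ) : ℚ) := by
      rw [hs0, Nat.cast_sub hmh0]; norm_num
    rw [hcast1, hcast2] at hq
    exact_mod_cast hq
  -- the weight bound for P
  have HV : ∀ m ∈ P.support, 2*t*(m 0) ≤ 2*t + s*(m 1) := by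
    intro m hm
    rcases Nat.eq_zero_or_pos (m 0) with h0 | h0
    · rw [h0]; omega
    rcases Nat.eq_zero_or_pos (m 1) with h1 | h1
    · -- m 1 = 0 : then m 0 = 1
      have hle : m 0 ≤ 1 := by
        by_contra hh
        push_neg at hh
        have hz := hPa0 (m 0 - 2)
        rw [show m 0 - 2 + 2 = m 0 by omega] at hz
        have hme : m = fm (m 0) 0 := by rw [← h1]; exact eq_fm m
        rw [← hme] at hz
        exact (MvPolynomial.mem_support_iff.mp hm) hz
      have : m 0 = 1 := by omega
      rw [this]
      omega
    · have hcr := hcross m hm h0 h1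
      have hmul := Nat.mul_le_mul_left t hcr
      have hts0 : t * s0 = s * kh := by rw [← hsg, ← htg]; ring
      have hL : t * ((m 0 - 1) * mh 1) = (2*(t*(m 0 - 1))) * kh := by
        rw [hkh]; ring
      have hR : t * (s0 * m 1) = (s * (m 1)) * kh := by
        rw [show t * (s0 * m 1) = (t * s0) * (m 1) by ring, hts0]; ring
      rw [hL, hR] at hmul
      have hkey : 2*(t*(m 0 - 1)) ≤ s*(m 1) :=
        Nat.le_of_mul_le_mul_right hmul (by omega)
      have e1 : t*(m 0) = t*(m 0 - 1) + t := by
        conv_lhs => rw [show m 0 = (m 0 - 1) + 1 by omega]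
        rw [Nat.mul_add, Nat.mul_one]
      have e2 : 2*t*(m 0) = 2*(t*(m 0)) := by ring
      omega
  -- leading coefficients along the critical line
  set A : ℕ → K := fun r => coeff (fm (s*r + 1) (2*(t*r))) P with hA
  have hmh_eq : mh = fm (s*g + 1) (2*(t*g)) := by
    rw [eq_fm mh]
    rw [fm_eq_iff]
    constructor
    · have : s * g = s0 := hsg
      omega
    · have : t * g = kh := htg
      omega
  have hAg : A g ≠ 0 := by
    rw [hA]
    simp only
    rw [← hmh_eq]
    exact MvPolynomial.mem_support_iff.mp hmhs
  set NS := (Finset.range (P.totalDegree + 1)).filter (fun r => A r ≠ 0) with hNS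
  have hmem_NS : ∀ r, A r ≠ 0 → r ∈ NS := by
    intro r hr
    refine Finset.mem_filter.mpr ⟨Finset.mem_range.mpr ?_, hr⟩
    have hsup : fm (s*r + 1) (2*(t*r)) ∈ P.support := MvPolynomial.mem_support_iff.mpr hr
    have hb := sum_le_totalDegree hsup
    simp only [fm_apply0, fm_apply1] at hb
    have : r ≤ t*r := Nat.le_mul_of_pos_left r (by omega)
    omega
  have hNSne : NS.Nonempty := ⟨g, hmem_NS g hAg⟩
  set N := NS.max' hNSne with hN
  have hAN : A N ≠ 0 := (Finset.mem_filter.mp (NS.max'_mem hNSne)).2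
  have hNmax : ∀ r, A r ≠ 0 → r ≤ N := fun r hr => Finset.le_max' _ _ (hmem_NS r hr)
  have hN1 : 1 ≤ N := le_trans (by omega) (hNmax g hAg)
  -- the weight bound for Q (from HW_lemma)
  have HW := HW_lemma P Q c lam hlam hJ hPev hQod hP10 s t ht HV
  -- phi coefficients
  set φ : ℕ → K := fun j => coeff (fm (s*j) (2*(t*j) + 1)) Q with hφ
  have hφ0 : φ 0 ≠ 0 := by
    rw [hφ]
    simp only [Nat.mul_zero, Nat.zero_mul, Nat.zero_add]
    rw [hQ01]
    exact heps
  set DS := (Finset.range (Q.totalDegree + 1)).filter (fun j => φ j ≠ 0) with hDS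
  have hmem_DS : ∀ j, φ j ≠ 0 → j ∈ DS := by
    intro j hj
    refine Finset.mem_filter.mpr ⟨Finset.mem_range.mpr ?_, hj⟩
    have hsup : fm (s*j) (2*(t*j)+1) ∈ Q.support := MvPolynomial.mem_support_iff.mpr hj
    have hb := sum_le_totalDegree hsup
    simp only [fm_apply0, fm_apply1] at hb
    have : j ≤ t*j := Nat.le_mul_of_pos_left j (by omega)
    omega
  have hDSne : DS.Nonempty := ⟨0, hmem_DS 0 hφ0⟩
  set D := DS.max' hDSne with hD
  have hφD : φ D ≠ 0 := (Finset.mem_filter.mp (DS.max'_mem hDSne)).2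
  have hDmax : ∀ j, φ j ≠ 0 → j ≤ D := fun j hj => Finset.le_max' _ _ (hmem_DS j hj)
  -- final extraction at the corner monomial
  set E := D + N with hE
  have hE1 : 1 ≤ E := by omega
  have hcoe := congrArg (coeff (fm (s*E) (2*(t*E)))) hJ
  rw [coeff_sub, coeff_pp01, coeff_pp10, coeff_C,
    if_neg (fm_ne_zero_of_snd' (by
      have : 1 ≤ t*E := Nat.one_le_iff_ne_zero.mpr (by positivity)
      omega))] at hcoe
  -- first sum
  have hs1 : (∑ x ∈ Finset.HasAntidiagonal.antidiagonal (fm (s*E) (2*(t*E))),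
      ((x.1 0 + 1 : ℕ) : K) * ((x.2 1 + 1 : ℕ) : K) *
        coeff (x.1 + Finsupp.single 0 1) P * coeff (x.2 + Finsupp.single 1 1) Q)
      = ((s*N + 1 : ℕ) : K) * ((2*(t*D) + 1 : ℕ) : K) * A N * φ D := by
    rw [Finset.sum_eq_single_of_mem (fm (s*N) (2*(t*N)), fm (s*D) (2*(t*D)))]
    · rw [fm_add_single0, fm_add_single1]
      simp only [fm_apply0, fm_apply1]
      rfl
    · rw [Finset.HasAntidiagonal.mem_antidiagonal]
      show fm (s*N) (2*(t*N)) + fm (s*D) (2*(t*D)) = fm (s*E) (2*(t*E))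
      rw [fm_add, fm_eq_iff]
      constructor
      · rw [← Nat.mul_add]; congr 1; omega
      · rw [show 2*(t*N) + 2*(t*D) = 2*(t*(N+D)) by ring]
        congr 2
        omega
    · rintro ⟨u, v⟩ hx hne
      by_contra hterm
      have hPC : coeff (u + Finsupp.single 0 1) P ≠ 0 := by
        intro h0; apply hterm; rw [h0]; ring
      have hQC : coeff (v + Finsupp.single 1 1) Q ≠ 0 := by
        intro h0; apply hterm; rw [h0]; ring
      obtain ⟨hc0, hc1⟩ := antid_comp hx
      simp only [fm_apply0, fm_apply1] at hc0 hc1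
      rw [add_single0] at hPC
      rw [add_single1] at hQC
      have hPs : fm (u 0 + 1) (u 1) ∈ P.support := MvPolynomial.mem_support_iff.mpr hPC
      have hEu : Even (u 1) := by
        by_contra hodd
        exact hPC (hPev _ (by simpa using hodd))
      have hOv : Odd (v 1 + 1) := by
        by_contra hev
        exact hQC (hQod _ (by simpa using hev))
      have hEv : Even (v 1) := by
        rw [Nat.odd_iff] at hOv
        rw [Nat.even_iff]
        omega
      obtain ⟨u1h, hu1h⟩ := hEu
      obtain ⟨v1h, hv1h⟩ := hEv
      have hu1 : u 1 = 2*u1h := by omega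
      have hv1 : v 1 = 2*v1h := by omega
      -- P weight bound
      have hVu := HV _ hPs
      simp only [fm_apply0, fm_apply1] at hVu
      have hVu2 : 2*(t*(u 0)) ≤ s*(u 1) := by
        have e : 2*t*(u 0 + 1) = 2*(t*(u 0)) + 2*t := by ring
        omega
      -- Q weight bound from HW
      have hWv : 2*(t*(v 0)) ≤ s*(v 1) := by
        have hQne : coeff (fm (v 0) (2*v1h + 1)) Q ≠ 0 := by
          rw [show (2*v1h + 1) = v 1 + 1 by omega]
          exact hQC
        have : ¬ (s*v1h < t*(v 0)) := fun hlt => hQne (HW v1h (v 0) hlt)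
        have e : s*(v 1) = 2*(s*v1h) := by rw [hv1]; ring
        omega
      -- forced equalities
      have htsum : t*(u 0) + t*(v 0) = t*(s*E) := by
        have h1 : t*(u 0 + v 0) = t*(u 0) + t*(v 0) := Nat.mul_add t _ _
        rw [hc0] at h1
        omega
      have hssum : s*(u 1) + s*(v 1) = 2*(s*(t*E)) := by
        have h1 : s*(u 1 + v 1) = s*(u 1) + s*(v 1) := Nat.mul_add s _ _
        rw [hc1] at h1
        have h2 : s*(2*(t*E)) = 2*(s*(t*E)) := by ring
        omega
      have hts : t*(s*E) = s*(t*E) := by ring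
      have hequ : 2*(t*(u 0)) = s*(u 1) := by omega
      have heqv : 2*(t*(v 0)) = s*(v 1) := by omega
      -- divisibility
      have hsu : t*(u 0) = s*u1h := by
        have e : s*(u 1) = 2*(s*u1h) := by rw [hu1]; ring
        omega
      have hdvdu : t ∣ u1h := by
        have : t ∣ s * u1h := ⟨u 0, hsu.symm⟩
        exact (Nat.Coprime.dvd_of_dvd_mul_left (hst.symm) this)
      obtain ⟨i, hi⟩ := hdvdu
      have hu0 : u 0 = s*i := by
        have e : t*(s*i) = s*u1h := by rw [hi]; ring
        have := hsu.trans e.symm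
        exact Nat.eq_of_mul_eq_mul_left (by omega) this
      have hsv : t*(v 0) = s*v1h := by
        have e : s*(v 1) = 2*(s*v1h) := by rw [hv1]; ring
        omega
      have hdvdv : t ∣ v1h := by
        have : t ∣ s * v1h := ⟨v 0, hsv.symm⟩
        exact (Nat.Coprime.dvd_of_dvd_mul_left (hst.symm) this)
      obtain ⟨j, hj⟩ := hdvdv
      have hv0 : v 0 = s*j := by
        have e : t*(s*j) = s*v1h := by rw [hj]; ring
        have := hsv.trans e.symm
        exact Nat.eq_of_mul_eq_mul_left (by omega) this
      -- bounds
      have hc2u : 2*(t*i) = u 1 := by rw [hu1, hi]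
      have hc2v : 2*(t*j) = v 1 := by rw [hv1, hj]
      have hAi : A i ≠ 0 := by
        show coeff (fm (s*i + 1) (2*(t*i))) P ≠ 0
        have hmon : fm (s*i + 1) (2*(t*i)) = fm (u 0 + 1) (u 1) :=
          fm_eq_iff.mpr ⟨by omega, hc2u⟩
        rw [hmon]
        exact hPC
      have hφj : φ j ≠ 0 := by
        show coeff (fm (s*j) (2*(t*j) + 1)) Q ≠ 0
        rw [show fm (s*j) (2*(t*j) + 1) = fm (v 0) (v 1 + 1) from
          fm_eq_iff.mpr ⟨by omega, by omega⟩]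
        exact hQC
      have hiN : i ≤ N := hNmax i hAi
      have hjD : j ≤ D := hDmax j hφj
      -- index sum
      have hijE : i + j = E := by
        have h1 : t*i + t*j = t*E := by
          have e1 : u 1 + v 1 = 2*(t*E) := hc1
          have e2 : u 1 = 2*(t*i) := hc2u.symm
          have e3 : v 1 = 2*(t*j) := hc2v.symm
          omega
        have h2 : t*(i+j) = t*i + t*j := Nat.mul_add t _ _
        have h3 : t*(i+j) = t*E := by omega
        exact Nat.eq_of_mul_eq_mul_left (by omega) h3
      have hiNj : i = N ∧ j = D := by omega
      apply hne
      have hufm : u = fm (s*N) (2*(t*N)) := by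
        rw [eq_fm u, fm_eq_iff]
        constructor
        · rw [hu0, hiNj.1]
        · rw [← hc2u, hiNj.1]
      have hvfm : v = fm (s*D) (2*(t*D)) := by
        rw [eq_fm v, fm_eq_iff]
        constructor
        · rw [hv0, hiNj.2]
        · rw [← hc2v, hiNj.2]
      rw [hufm, hvfm]

  -- second sum
  have hs2 : (∑ x ∈ Finset.HasAntidiagonal.antidiagonal (fm (s*E) (2*(t*E))),
      ((x.1 1 + 1 : ℕ) : K) * ((x.2 0 + 1 : ℕ) : K) *
        coeff (x.1 + Finsupp.single 1 1) P * coeff (x.2 + Finsupp.single 0 1) Q)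
      = ((2*(t*N) : ℕ) : K) * ((s*D : ℕ) : K) * A N * φ D := by
    have key : ∀ u v : Fin 2 →₀ ℕ, (u, v) ∈ Finset.HasAntidiagonal.antidiagonal (fm (s*E) (2*(t*E))) →
        coeff (u + Finsupp.single 1 1) P ≠ 0 → coeff (v + Finsupp.single 0 1) Q ≠ 0 →
        1 ≤ s*D ∧ u = fm (s*N + 1) (2*(t*N) - 1) ∧ v = fm (s*D - 1) (2*(t*D) + 1) := by
      intro u v hx hPC hQC
      obtain ⟨hc0, hc1⟩ := antid_comp hx
      simp only [fm_apply0, fm_apply1] at hc0 hc1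
      rw [add_single1] at hPC
      rw [add_single0] at hQC
      have hPs : fm (u 0) (u 1 + 1) ∈ P.support := MvPolynomial.mem_support_iff.mpr hPC
      have hEu : Even (u 1 + 1) := by
        by_contra hodd
        exact hPC (hPev _ (by simpa using hodd))
      have hOv : Odd (v 1) := by
        by_contra hev
        exact hQC (hQod _ (by simpa using hev))
      obtain ⟨w0, hw0⟩ := hEu
      set w := w0 with hwdef
      have hw : u 1 + 1 = 2*w := by omega
      have hw1 : 1 ≤ w := by omega
      obtain ⟨k', hk'⟩ := hOv
      have hVu := HV _ hPs
      simp only [fm_apply0, fm_apply1] at hVu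
      have hVu2 : t*(u 0) ≤ t + s*w := by
        have e1 : 2*t*(u 0) = 2*(t*(u 0)) := by ring
        have e2 : s*(u 1 + 1) = 2*(s*w) := by rw [hw]; ring
        omega
      have hWv : t*(v 0 + 1) ≤ s*k' := by
        by_contra hlt
        push_neg at hlt
        apply hQC
        rw [show v 1 = 2*k' + 1 by omega]
        exact HW k' (v 0 + 1) hlt
      have htsum : t*(u 0) + t*(v 0) = t*(s*E) := by
        have h1 : t*(u 0 + v 0) = t*(u 0) + t*(v 0) := Nat.mul_add t _ _
        rw [hc0] at h1
        omega
      have hwk : w + k' = t*E := by omega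
      have hswk : s*w + s*k' = s*(t*E) := by
        have h1 : s*(w + k') = s*w + s*k' := Nat.mul_add s _ _
        rw [hwk] at h1
        omega
      have hts : t*(s*E) = s*(t*E) := by ring
      have htv : t*(v 0 + 1) = t*(v 0) + t := by ring
      have hequ : t*(u 0) = t + s*w := by omega
      have heqv : t*(v 0 + 1) = s*k' := by omega
      have hu01 : 1 ≤ u 0 := by
        rcases Nat.eq_zero_or_pos (u 0) with h | h
        · rw [h, Nat.mul_zero] at hequ; omega
        · exact h
      have hsu : t*(u 0 - 1) = s*w := by
        have e : t*(u 0) = t*(u 0 - 1) + t := by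
          conv_lhs => rw [show u 0 = (u 0 - 1) + 1 by omega]
          rw [Nat.mul_add, Nat.mul_one]
        omega
      have hdvdu : t ∣ w := Nat.Coprime.dvd_of_dvd_mul_left hst.symm ⟨u 0 - 1, hsu.symm⟩
      obtain ⟨i, hi⟩ := hdvdu
      have hi1 : 1 ≤ i := by
        rcases Nat.eq_zero_or_pos i with h | h
        · rw [h, Nat.mul_zero] at hi; omega
        · exact h
      have hu0 : u 0 = s*i + 1 := by
        have e2 : s*w = t*(s*i) := by rw [hi]; ring
        have h3 := Nat.eq_of_mul_eq_mul_left (by omega : 0 < t) (hsu.trans e2)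
        omega
      have hdvdv : t ∣ k' := Nat.Coprime.dvd_of_dvd_mul_left hst.symm ⟨v 0 + 1, heqv.symm⟩
      obtain ⟨j, hj⟩ := hdvdv
      have hv0 : v 0 + 1 = s*j := by
        have e2 : s*k' = t*(s*j) := by rw [hj]; ring
        exact Nat.eq_of_mul_eq_mul_left (by omega : 0 < t) (heqv.trans e2)
      have hc2u : 2*(t*i) = u 1 + 1 := by
        have e : 2*(t*i) = 2*w := by rw [hi]
        omega
      have hc2v : 2*(t*j) + 1 = v 1 := by
        have e : 2*(t*j) = 2*k' := by rw [hj]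
        omega
      have hAi : A i ≠ 0 := by
        show coeff (fm (s*i + 1) (2*(t*i))) P ≠ 0
        have hmon : fm (s*i + 1) (2*(t*i)) = fm (u 0) (u 1 + 1) :=
          fm_eq_iff.mpr ⟨by omega, hc2u⟩
        rw [hmon]
        exact hPC
      have hφj : φ j ≠ 0 := by
        show coeff (fm (s*j) (2*(t*j) + 1)) Q ≠ 0
        have hmon : fm (s*j) (2*(t*j) + 1) = fm (v 0 + 1) (v 1) :=
          fm_eq_iff.mpr ⟨by omega, hc2v⟩
        rw [hmon]
        exact hQC
      have hiN : i ≤ N := hNmax i hAi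
      have hjD : j ≤ D := hDmax j hφj
      have hijE : i + j = E := by
        have h1 : t*i + t*j = t*E := by omega
        have h2 : t*(i+j) = t*i + t*j := Nat.mul_add t _ _
        exact Nat.eq_of_mul_eq_mul_left (by omega : 0 < t) (by omega : t*(i+j) = t*E)
      have hiNj : i = N ∧ j = D := by omega
      have hwN : w = t*N := by rw [hi, hiNj.1]
      have hkD : k' = t*D := by rw [hj, hiNj.2]
      have hv0D : v 0 + 1 = s*D := by rw [hv0, hiNj.2]
      refine ⟨by omega, ?_, ?_⟩
      · rw [eq_fm u, fm_eq_iff]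
        constructor
        · rw [hu0, hiNj.1]
        · omega
      · rw [eq_fm v, fm_eq_iff]
        constructor
        · omega
        · omega
    rcases Nat.eq_zero_or_pos (s*D) with hsD | hsD
    · have hz : (∑ x ∈ Finset.HasAntidiagonal.antidiagonal (fm (s*E) (2*(t*E))),
          ((x.1 1 + 1 : ℕ) : K) * ((x.2 0 + 1 : ℕ) : K) *
            coeff (x.1 + Finsupp.single 1 1) P * coeff (x.2 + Finsupp.single 0 1) Q) = 0 := by
        refine Finset.sum_eq_zero ?_
        rintro ⟨u, v⟩ hx
        by_contra hterm
        have hPC : coeff (u + Finsupp.single 1 1) P ≠ 0 := by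
          intro h0; apply hterm; rw [h0]; ring
        have hQC : coeff (v + Finsupp.single 0 1) Q ≠ 0 := by
          intro h0; apply hterm; rw [h0]; ring
        obtain ⟨h1, _, _⟩ := key u v hx hPC hQC
        omega
      rw [hz, hsD]
      simp
    · rw [Finset.sum_eq_single_of_mem (fm (s*N + 1) (2*(t*N) - 1), fm (s*D - 1) (2*(t*D) + 1))]
      · rw [fm_add_single1, fm_add_single0]
        simp only [fm_apply0, fm_apply1]
        have htN : 1 ≤ t*N := by
          have := Nat.mul_le_mul ht hN1
          omega
        rw [show 2*(t*N) - 1 + 1 = 2*(t*N) by omega, show s*D - 1 + 1 = s*D by omega]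
      · rw [Finset.HasAntidiagonal.mem_antidiagonal]
        show fm (s*N + 1) (2*(t*N) - 1) + fm (s*D - 1) (2*(t*D) + 1) = fm (s*E) (2*(t*E))
        rw [fm_add, fm_eq_iff]
        have hsplit1 : s*N + s*D = s*E := by
          have h1 : s*(N+D) = s*N + s*D := Nat.mul_add s _ _
          have h2 : s*(N+D) = s*E := by congr 1; omega
          omega
        have hsplit2 : t*N + t*D = t*E := by
          have h1 : t*(N+D) = t*N + t*D := Nat.mul_add t _ _
          have h2 : t*(N+D) = t*E := by congr 1; omega
          omega
        have htN : 1 ≤ t*N := by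
          have := Nat.mul_le_mul ht hN1
          omega
        constructor
        · omega
        · omega
      · rintro ⟨u, v⟩ hx hne
        by_contra hterm
        have hPC : coeff (u + Finsupp.single 1 1) P ≠ 0 := by
          intro h0; apply hterm; rw [h0]; ring
        have hQC : coeff (v + Finsupp.single 0 1) Q ≠ 0 := by
          intro h0; apply hterm; rw [h0]; ring
        obtain ⟨_, hu, hv⟩ := key u v hx hPC hQC
        apply hne
        rw [hu, hv]
  rw [hs1, hs2] at hcoe
  have hkey2 : ((s*N + 1 : ℕ) : K) * ((2*(t*D) + 1 : ℕ) : K)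
      - ((2*(t*N) : ℕ) : K) * ((s*D : ℕ) : K) = ((s*N + 2*(t*D) + 1 : ℕ) : K) := by
    push_cast
    ring
  have hfinal : ((s*N + 2*(t*D) + 1 : ℕ) : K) * (A N * φ D) = 0 := by
    rw [← hkey2]
    linear_combination hcoe
  have hcast : ((s*N + 2*(t*D) + 1 : ℕ) : K) ≠ 0 := Nat.cast_ne_zero.mpr (by omega)
  rcases mul_eq_zero.mp hfinal with h | h
  · exact hcast h
  · rcases mul_eq_zero.mp h with h' | h'
    · exact hAN h'
    · exact hφD h'




lemma Qonly (P Q : MvPolynomial (Fin 2) K) (c lam : K) (hlam : lam ≠ 0)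
    (hJ : pderiv 0 P * pderiv 1 Q - pderiv 1 P * pderiv 0 Q = C c)
    (hPev : ∀ m : Fin 2 →₀ ℕ, ¬ Even (m 1) → coeff m P = 0)
    (hQod : ∀ m : Fin 2 →₀ ℕ, ¬ Odd (m 1) → coeff m Q = 0)
    (hP10 : coeff (fm 1 0) P = lam)
    (hQb1 : ∀ b, coeff (fm (b + 1) 1) Q = 0)
    (hPsupp : ∀ m ∈ P.support, m 0 = 0 ∨ m = fm 1 0) :
    ∀ k, 1 ≤ k → ∀ d, coeff (fm d (2*k+1)) Q = 0 := by
  intro k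
  induction k using Nat.strong_induction_on with
  | _ k IH =>
  intro hk1 d
  have hcoe := congrArg (coeff (fm d (2*k))) hJ
  rw [coeff_sub, coeff_pp01, coeff_pp10, coeff_C,
    if_neg (fm_ne_zero_of_snd' (by omega : 2*k ≠ 0))] at hcoe
  have hs1 : (∑ x ∈ Finset.HasAntidiagonal.antidiagonal (fm d (2*k)),
      ((x.1 0 + 1 : ℕ) : K) * ((x.2 1 + 1 : ℕ) : K) *
        coeff (x.1 + Finsupp.single 0 1) P * coeff (x.2 + Finsupp.single 1 1) Q)
      = ((2*k+1 : ℕ) : K) * lam * coeff (fm d (2*k+1)) Q := by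
    rw [Finset.sum_eq_single_of_mem ((0 : Fin 2 →₀ ℕ), fm d (2*k))
      (Finset.HasAntidiagonal.mem_antidiagonal.mpr (zero_add _))]
    · rw [zero_add, single0_eq_fm, hP10, fm_add_single1]
      simp only [Finsupp.coe_zero, Pi.zero_apply, fm_apply1]
      push_cast
      ring
    · rintro ⟨u, v⟩ hx hne
      by_contra hterm
      have hPC : coeff (u + Finsupp.single 0 1) P ≠ 0 := by
        intro h0; apply hterm; rw [h0]; ring
      rw [add_single0] at hPC
      have hPs : fm (u 0 + 1) (u 1) ∈ P.support := MvPolynomial.mem_support_iff.mpr hPC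
      rcases hPsupp _ hPs with h | h
      · simp at h
      · have h0 : u 0 + 1 = 1 := by
          have := congrArg (fun m => m 0) h
          simpa using this
        have h1 : u 1 = 0 := by
          have := congrArg (fun m => m 1) h
          simpa using this
        apply hne
        have hu : u = 0 := by
          rw [eq_fm u, show u 0 = 0 by omega, h1, fm_zero]
        have hv : v = fm d (2*k) := by
          have := Finset.HasAntidiagonal.mem_antidiagonal.mp hx
          rwa [hu, zero_add] at this
        rw [hu, hv]
  have hs2 : (∑ x ∈ Finset.HasAntidiagonal.antidiagonal (fm d (2*k)),
      ((x.1 1 + 1 : ℕ) : K) * ((x.2 0 + 1 : ℕ) : K) *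
        coeff (x.1 + Finsupp.single 1 1) P * coeff (x.2 + Finsupp.single 0 1) Q) = 0 := by
    refine Finset.sum_eq_zero ?_
    rintro ⟨u, v⟩ hx
    by_contra hterm
    have hPC : coeff (u + Finsupp.single 1 1) P ≠ 0 := by
      intro h0; apply hterm; rw [h0]; ring
    have hQC : coeff (v + Finsupp.single 0 1) Q ≠ 0 := by
      intro h0; apply hterm; rw [h0]; ring
    obtain ⟨hc0, hc1⟩ := antid_comp hx
    simp only [fm_apply0, fm_apply1] at hc0 hc1
    rw [add_single1] at hPC
    rw [add_single0] at hQC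
    have hPs : fm (u 0) (u 1 + 1) ∈ P.support := MvPolynomial.mem_support_iff.mpr hPC
    have hEu : Even (u 1 + 1) := by
      by_contra hodd
      exact hPC (hPev _ (by simpa using hodd))
    obtain ⟨j1, hj1⟩ : ∃ j1, u 1 = 2*j1 + 1 := by
      have h2 := Nat.even_add_one.mp hEu
      rw [Nat.not_even_iff] at h2
      exact ⟨u 1 / 2, by omega⟩
    have hOv : Odd (v 1) := by
      by_contra hev
      exact hQC (hQod _ (by simpa using hev))
    obtain ⟨k', hk'⟩ := hOv
    have hk'k : k' < k := by omega
    rcases Nat.eq_zero_or_pos k' with h0 | h0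
    · apply hQC
      rw [show fm (v 0 + 1) (v 1) = fm (v 0 + 1) 1 by rw [fm_eq_iff]; omega]
      exact hQb1 (v 0)
    · apply hQC
      rw [show fm (v 0 + 1) (v 1) = fm (v 0 + 1) (2*k'+1) by rw [fm_eq_iff]; omega]
      exact IH k' hk'k (by omega) (v 0 + 1)
  rw [hs1, hs2, sub_zero] at hcoe
  have hcast : ((2*k+1 : ℕ) : K) ≠ 0 := Nat.cast_ne_zero.mpr (by omega)
  rcases mul_eq_zero.mp hcoe with h | h
  · rcases mul_eq_zero.mp h with h' | h'
    · exact absurd h' hcast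
    · exact absurd h' hlam
  · exact h

lemma C_mul_X (a : K) (i : Fin 2) :
    (C a * X i : MvPolynomial (Fin 2) K) = monomial (Finsupp.single i 1) a := by
  rw [X, C_mul_monomial, mul_one]

lemma exists_poly (A : MvPolynomial (Fin 2) K) (h : ∀ m ∈ A.support, m 0 = 0) :
    ∃ r : Polynomial K, A = Polynomial.aeval (X 1 : MvPolynomial (Fin 2) K) r := by
  refine ⟨A.support.sum (fun m => Polynomial.monomial (m 1) (coeff m A)), ?_⟩
  rw [map_sum]
  conv_lhs => rw [← support_sum_monomial_coeff A]
  refine Finset.sum_congr rfl fun m hm => ?_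
  rw [Polynomial.aeval_monomial]
  have hm0 := h m hm
  have hms : m = Finsupp.single 1 (m 1) := by
    ext i
    fin_cases i
    · simpa using hm0
    · simp
  have key : ∀ (n : ℕ) (b : K), (algebraMap K (MvPolynomial (Fin 2) K)) b * X 1 ^ n
      = monomial (Finsupp.single 1 n) b := by
    intro n b
    rw [X_pow_eq_monomial, show (algebraMap K (MvPolynomial (Fin 2) K)) b = C b from rfl,
      C_mul_monomial, mul_one]
  rw [hms, Finsupp.single_eq_same, key]


noncomputable def piv : R →ₐ[K] Polynomial K := aeval ![Polynomial.X, (0 : Polynomial K)]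

lemma pi_coeff (A : R) (a : ℕ) :
    (piv A).coeff a = coeff (fm a 0) A := by
  induction A using MvPolynomial.induction_on' with
  | add p q hp hq => simp [hp, hq]
  | monomial u r =>
    show ((aeval ![Polynomial.X, (0 : Polynomial K)] : R →ₐ[K] Polynomial K) _).coeff a = _
    rw [aeval_monomial, Finsupp.prod_fintype _ _ (fun i => pow_zero _), Fin.prod_univ_two]
    simp only [Matrix.cons_val_zero, Matrix.cons_val_one, Matrix.head_cons]
    by_cases h1 : u 1 = 0
    · rw [h1, pow_zero, mul_one]
      have : (algebraMap K (Polynomial K)) r = Polynomial.C r := rfl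
      rw [this, Polynomial.coeff_C_mul, Polynomial.coeff_X_pow, coeff_monomial]
      by_cases h2 : u = fm a 0
      · rw [if_pos h2, if_pos]
        · simp
        · rw [h2]; simp
      · rw [if_neg h2, if_neg]
        · simp
        · intro hc
          apply h2
          ext i
          fin_cases i
          · have hc2 : a = u 0 := by simpa using hc
            simp [fm, Finsupp.single_apply, ← hc2]
          · simpa using h1
    · rw [zero_pow h1, mul_zero, coeff_monomial, if_neg]
      · simp
      · intro hc
        rw [hc] at h1
        simp at h1

lemma step0 (P Q : R) (c : K) (hc : c ≠ 0)
    (hJ : pderiv 0 P * pderiv 1 Q - pderiv 1 P * pderiv 0 Q = C c)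
    (hPev : ∀ m : Fin 2 →₀ ℕ, ¬ Even (m 1) → coeff m P = 0) :
    ∃ lam eps : K, lam ≠ 0 ∧ eps ≠ 0 ∧
      coeff (fm 1 0) P = lam ∧ (∀ a, coeff (fm (a + 2) 0) P = 0) ∧
      coeff (fm 0 1) Q = eps ∧ (∀ b, coeff (fm (b + 1) 1) Q = 0) := by
  have hπ := congrArg (piv : R →ₐ[K] Polynomial K) hJ
  have hπC : (piv : R →ₐ[K] Polynomial K) (C c) = Polynomial.C c := by
    rw [show (C c : R) = algebraMap K R c from rfl, AlgHom.commutes]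
    rfl
  rw [map_sub, map_mul, map_mul, hπC] at hπ
  have hπP1 : (piv : R →ₐ[K] Polynomial K) (pderiv 1 P) = 0 := by
    apply Polynomial.ext
    intro a
    rw [pi_coeff, coeff_pderiv]
    rw [show (fm a 0) + Finsupp.single 1 1 = fm a 1 from fm_add_single1 a 0]
    rw [hPev (fm a 1) (by simp)]
    simp
  rw [hπP1, zero_mul, sub_zero] at hπ
  -- both factors are nonzero constants
  have hne0 : (piv : R →ₐ[K] Polynomial K) (pderiv 0 P) ≠ 0 := by
    intro h
    rw [h, zero_mul] at hπ
    exact hc (by simpa using (Polynomial.C_eq_zero.mp hπ.symm))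
  have hne1 : (piv : R →ₐ[K] Polynomial K) (pderiv 1 Q) ≠ 0 := by
    intro h
    rw [h, mul_zero] at hπ
    exact hc (by simpa using (Polynomial.C_eq_zero.mp hπ.symm))
  have hdeg := Polynomial.natDegree_mul hne0 hne1
  rw [hπ, Polynomial.natDegree_C] at hdeg
  obtain ⟨lam, hlamC⟩ := Polynomial.natDegree_eq_zero.mp (by omega : ((piv : R →ₐ[K] Polynomial K) (pderiv 0 P)).natDegree = 0)
  obtain ⟨eps, hepsC⟩ := Polynomial.natDegree_eq_zero.mp (by omega : ((piv : R →ₐ[K] Polynomial K) (pderiv 1 Q)).natDegree = 0)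
  have hprod : lam * eps = c := by
    have : Polynomial.C (lam * eps) = Polynomial.C c := by
      rw [map_mul, hlamC, hepsC, hπ]
    exact Polynomial.C_injective this
  have hlam : lam ≠ 0 := fun h => hc (by rw [← hprod, h, zero_mul])
  have heps : eps ≠ 0 := fun h => hc (by rw [← hprod, h, mul_zero])
  refine ⟨lam, eps, hlam, heps, ?_, ?_, ?_, ?_⟩
  · have := congrArg (fun p => Polynomial.coeff p 0) hlamC
    simp only [Polynomial.coeff_C] at this
    rw [pi_coeff, coeff_pderiv] at this
    rw [show (fm 0 0) + Finsupp.single 0 1 = fm 1 0 by rw [fm_add_single0]] at this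
    simpa using this.symm
  · intro a
    have := congrArg (fun p => Polynomial.coeff p (a+1)) hlamC
    simp only [Polynomial.coeff_C] at this
    rw [pi_coeff, coeff_pderiv] at this
    rw [show (fm (a+1) 0) + Finsupp.single 0 1 = fm (a+2) 0 by rw [fm_add_single0]] at this
    simp only [fm_apply0] at this
    rw [if_neg (by omega : ¬ (a + 1 = 0))] at this
    have h3 : ((a + 1 + 1 : ℕ) : K) ≠ 0 := Nat.cast_ne_zero.mpr (by omega)
    exact (mul_eq_zero.mp this.symm).resolve_left h3
  · have := congrArg (fun p => Polynomial.coeff p 0) hepsC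
    simp only [Polynomial.coeff_C] at this
    rw [pi_coeff, coeff_pderiv] at this
    rw [show (fm 0 0) + Finsupp.single 1 1 = fm 0 1 by rw [fm_add_single1]] at this
    simpa using this.symm
  · intro b
    have := congrArg (fun p => Polynomial.coeff p (b+1)) hepsC
    simp only [Polynomial.coeff_C] at this
    rw [pi_coeff, coeff_pderiv] at this
    rw [show (fm (b+1) 0) + Finsupp.single 1 1 = fm (b+1) 1 by rw [fm_add_single1]] at this
    rw [if_neg (by omega : ¬ (b + 1 = 0))] at this
    simpa using this.symm


noncomputable def tau : R →ₐ[K] R := aeval ![X 0, - X 1]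

lemma tau_coeff (A : R) (m : Fin 2 →₀ ℕ) :
    coeff m (tau A) = (-1 : K) ^ (m 1) * coeff m A := by
  induction A using MvPolynomial.induction_on' with
  | add p q hp hq => simp [hp, hq, mul_add]
  | monomial u a =>
    have key : tau ((monomial u) a) = C ((-1 : K) ^ (u 1)) * (monomial u) a := by
      show (aeval ![X 0, - X 1] : R →ₐ[K] R) ((monomial u) a) = _
      rw [aeval_monomial, Finsupp.prod_fintype _ _ (fun i => pow_zero _),
        Fin.prod_univ_two]
      simp only [Matrix.cons_val_zero, Matrix.cons_val_one, Matrix.head_cons]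
      rw [neg_pow]
      rw [monomial_eq, Finsupp.prod_fintype _ _ (fun i => pow_zero _), Fin.prod_univ_two]
      rw [algebraMap_eq, C_pow]
      simp only [map_neg, map_one]
      ring
    rw [key, MvPolynomial.coeff_C_mul]
    by_cases h : u = m
    · subst h; simp
    · rw [coeff_monomial, if_neg h]
      simp

lemma even_of_tau_fixed {A : R} (h : tau A = A) :
    ∀ m : Fin 2 →₀ ℕ, ¬ Even (m 1) → coeff m A = 0 := by
  intro m hm
  have h1 := tau_coeff A m
  rw [h, (Nat.not_even_iff_odd.mp hm).neg_one_pow] at h1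
  have h2 : (2 : K) * coeff m A = 0 := by linear_combination h1
  simpa [(two_ne_zero : (2:K) ≠ 0)] using h2

lemma odd_of_tau_neg {A : R} (h : tau A = - A) :
    ∀ m : Fin 2 →₀ ℕ, ¬ Odd (m 1) → coeff m A = 0 := by
  intro m hm
  have h1 := tau_coeff A m
  rw [h, Even.neg_one_pow (Nat.not_odd_iff_even.mp hm)] at h1
  simp only [coeff_neg, one_mul] at h1
  have h2 : (2 : K) * coeff m A = 0 := by linear_combination - h1
  simpa [(two_ne_zero : (2:K) ≠ 0)] using h2



lemma pderiv_aeval_fin2 (g : Fin 2 → R) (h : R) (i : Fin 2) :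
    pderiv i (aeval g h) =
      aeval g (pderiv 0 h) * pderiv i (g 0) + aeval g (pderiv 1 h) * pderiv i (g 1) := by
  induction h using MvPolynomial.induction_on with
  | C a => simp
  | add p q hp hq =>
    simp only [map_add, hp, hq]
    ring
  | mul_X p j hp =>
    have hX : aeval g (p * X j) = aeval g p * g j := by simp
    rw [hX, pderiv_mul, hp]
    have h0 : pderiv 0 (p * X j) = pderiv 0 p * X j + p * pderiv 0 (X j) := pderiv_mul
    have h1 : pderiv 1 (p * X j) = pderiv 1 p * X j + p * pderiv 1 (X j) := pderiv_mul
    rw [h0, h1]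
    simp only [map_add, map_mul, aeval_X]
    fin_cases j <;>
    · simp [pderiv_X, Pi.single_apply]
      ring

lemma jac_aeval (g : Fin 2 → R) (A B : R) :
    pderiv 0 (aeval g A) * pderiv 1 (aeval g B) - pderiv 1 (aeval g A) * pderiv 0 (aeval g B)
      = aeval g (pderiv 0 A * pderiv 1 B - pderiv 1 A * pderiv 0 B) *
        (pderiv 0 (g 0) * pderiv 1 (g 1) - pderiv 1 (g 0) * pderiv 0 (g 1)) := by
  rw [pderiv_aeval_fin2, pderiv_aeval_fin2, pderiv_aeval_fin2, pderiv_aeval_fin2]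
  simp only [map_sub, map_mul]
  ring

lemma bij_of_comp_id (F G : R →ₐ[K] R) (h1 : F.comp G = AlgHom.id K R)
    (h2 : G.comp F = AlgHom.id K R) : Function.Bijective F := by
  constructor
  · intro a b hab
    have := congrArg G hab
    have e1 := AlgHom.congr_fun h2 a
    have e2 := AlgHom.congr_fun h2 b
    simp only [AlgHom.comp_apply, AlgHom.id_apply] at e1 e2
    rwa [e1, e2] at this
  · intro y
    refine ⟨G y, ?_⟩
    have := AlgHom.congr_fun h1 y
    simpa using this


noncomputable def gT : Fin 2 → R := ![X 0 + X 1, X 0 - X 1]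
noncomputable def gTi : Fin 2 → R := ![C (2:K)⁻¹ * (X 0 + X 1), C (2:K)⁻¹ * (X 0 - X 1)]

noncomputable def TT : R →ₐ[K] R := aeval gT
noncomputable def TTi : R →ₐ[K] R := aeval gTi

@[simp] lemma gT0 : gT (0 : Fin 2) = (X 0 + X 1 : R) := rfl
@[simp] lemma gT1 : gT (1 : Fin 2) = (X 0 - X 1 : R) := rfl
@[simp] lemma gTi0 : gTi (0 : Fin 2) = (C (2:K)⁻¹ * (X 0 + X 1) : R) := rfl
@[simp] lemma gTi1 : gTi (1 : Fin 2) = (C (2:K)⁻¹ * (X 0 - X 1) : R) := rfl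

@[simp] lemma TT_X0 : TT (X 0) = (X 0 + X 1 : R) := by simp [TT]
@[simp] lemma TT_X1 : TT (X 1) = (X 0 - X 1 : R) := by simp [TT]
@[simp] lemma TTi_X0 : TTi (X 0) = (C (2:K)⁻¹ * (X 0 + X 1) : R) := by simp [TTi]
@[simp] lemma TTi_X1 : TTi (X 1) = (C (2:K)⁻¹ * (X 0 - X 1) : R) := by simp [TTi]
@[simp] lemma tau_X0 : tau (X 0) = (X 0 : R) := by simp [tau]
@[simp] lemma tau_X1 : tau (X 1) = (- X 1 : R) := by simp [tau]

lemma two_inv_two : (C (2:K)⁻¹ * C (2:K) : R) = 1 := by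
  rw [← C_mul, inv_mul_cancel₀ (two_ne_zero), C_1]

lemma algebraMap_eq_C (a : K) : (algebraMap K R) a = C a := rfl

lemma fin2_cases (i : Fin 2) : i = 0 ∨ i = 1 := by omega

lemma C_two : (C (2:K) : R) = 2 := by
  rw [show (2:K) = 1 + 1 by norm_num, map_add, C_1]
  norm_num

lemma half_two (A : R) : C (2:K)⁻¹ * (C (2:K) * A) = A := by
  rw [← mul_assoc, two_inv_two, one_mul]

lemma TT_comm_C (a : K) : TT (C a) = (C a : R) := by
  rw [show (C a : R) = algebraMap K R a from rfl, AlgHom.commutes]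

lemma TTi_comm_C (a : K) : TTi (C a) = (C a : R) := by
  rw [show (C a : R) = algebraMap K R a from rfl, AlgHom.commutes]

lemma tau_comm_C (a : K) : tau (C a) = (C a : R) := by
  rw [show (C a : R) = algebraMap K R a from rfl, AlgHom.commutes]

lemma TT_TTi : (TT : R →ₐ[K] R).comp TTi = AlgHom.id K R := by
  apply MvPolynomial.algHom_ext
  intro i
  rcases fin2_cases i with rfl | rfl <;>
    rw [AlgHom.comp_apply, AlgHom.id_apply]
  · rw [TTi_X0, map_mul, TT_comm_C, map_add, TT_X0, TT_X1,
      show (X 0 + X 1 + (X 0 - X 1) : R) = C (2:K) * X 0 by rw [C_two]; ring, half_two]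
  · rw [TTi_X1, map_mul, TT_comm_C, map_sub, TT_X0, TT_X1,
      show (X 0 + X 1 - (X 0 - X 1) : R) = C (2:K) * X 1 by rw [C_two]; ring, half_two]

lemma TTi_TT : (TTi : R →ₐ[K] R).comp TT = AlgHom.id K R := by
  apply MvPolynomial.algHom_ext
  intro i
  rcases fin2_cases i with rfl | rfl <;>
    rw [AlgHom.comp_apply, AlgHom.id_apply]
  · rw [TT_X0, map_add, TTi_X0, TTi_X1,
      show (C (2:K)⁻¹ * (X 0 + X 1) + C (2:K)⁻¹ * (X 0 - X 1) : R) = C (2:K)⁻¹ * (C 2 * X 0) by rw [C_two]; ring,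
      half_two]
  · rw [TT_X1, map_sub, TTi_X0, TTi_X1,
      show (C (2:K)⁻¹ * (X 0 + X 1) - C (2:K)⁻¹ * (X 0 - X 1) : R) = C (2:K)⁻¹ * (C 2 * X 1) by rw [C_two]; ring,
      half_two]

lemma exch_X0 : exch K (X 0) = (X 1 : R) := by
  simp [exch, renameEquiv_apply, rename_X]

lemma exch_X1 : exch K (X 1) = (X 0 : R) := by
  simp [exch, renameEquiv_apply, rename_X]

lemma tau_TTi_comm : (tau.comp TTi : R →ₐ[K] R) = TTi.comp (exch K).toAlgHom := by
  apply MvPolynomial.algHom_ext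
  intro i
  rcases fin2_cases i with rfl | rfl <;>
    simp only [AlgHom.comp_apply, AlgEquiv.toAlgHom_eq_coe, AlgHom.coe_coe, AlgEquiv.coe_toAlgHom]
  · rw [TTi_X0, map_mul, tau_comm_C, map_add, tau_X0, tau_X1, exch_X0, TTi_X1]
    ring
  · rw [TTi_X1, map_mul, tau_comm_C, map_sub, tau_X0, tau_X1, exch_X1, TTi_X0]
    ring


lemma inv_C_mul {a : K} (ha : a ≠ 0) (A : R) : C a⁻¹ * (C a * A) = A := by
  rw [← mul_assoc, ← C_mul, inv_mul_cancel₀ ha, C_1, one_mul]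


lemma jacGTi : (pderiv 0 (gTi 0) * pderiv 1 (gTi 1) - pderiv 1 (gTi 0) * pderiv 0 (gTi 1) : R)
    = C (-(2:K)⁻¹) := by
  rw [gTi0, gTi1]
  simp only [pderiv_mul, pderiv_C, map_add, map_sub, pderiv_X, Pi.single_apply]
  norm_num
  simp only [← C_mul, ← C_neg, ← C_sub, ← C_add]
  congr 1
  field_simp
  ring


lemma core (P Q : MvPolynomial (Fin 2) K) (c : K) (hc : c ≠ 0)
    (hJ : pderiv 0 P * pderiv 1 Q - pderiv 1 P * pderiv 0 Q = C c)
    (hPev : ∀ m : Fin 2 →₀ ℕ, ¬ Even (m 1) → coeff m P = 0)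
    (hQod : ∀ m : Fin 2 →₀ ℕ, ¬ Odd (m 1) → coeff m Q = 0) :
    ∃ (lam eps : K) (r : Polynomial K), lam ≠ 0 ∧ eps ≠ 0 ∧
      P = C lam * X 0 + Polynomial.aeval (X 1 : MvPolynomial (Fin 2) K) r ∧
      Q = C eps * X 1 := by
  obtain ⟨lam, eps, hlam, heps, hP10, hPa0, hQ01, hQb1⟩ := step0 P Q c hc hJ hPev
  have hnb := no_bad P Q c lam eps hc hlam heps hJ hPev hQod hP10 hPa0 hQ01 hQb1
  have hPsupp : ∀ m ∈ P.support, m 0 = 0 ∨ m = fm 1 0 := by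
    intro m hm
    rcases Nat.eq_zero_or_pos (m 0) with h | h
    · exact Or.inl h
    · right
      have h1 := hnb m hm h
      have hle : m 0 ≤ 1 := by
        by_contra hh
        push_neg at hh
        have hz := hPa0 (m 0 - 2)
        rw [show m 0 - 2 + 2 = m 0 by omega] at hz
        have hme : m = fm (m 0) 0 := by rw [← h1]; exact eq_fm m
        rw [← hme] at hz
        exact (MvPolynomial.mem_support_iff.mp hm) hz
      rw [eq_fm m, fm_eq_iff]
      omega
  have hQ2 := Qonly P Q c lam hlam hJ hPev hQod hP10 hQb1 hPsupp
  have hQsupp : ∀ m ∈ Q.support, m = fm 0 1 := by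
    intro m hm
    have hOv : Odd (m 1) := by
      by_contra hev
      exact (MvPolynomial.mem_support_iff.mp hm) (hQod _ hev)
    obtain ⟨k, hk⟩ := hOv
    rcases Nat.eq_zero_or_pos k with h0 | h0
    · rcases Nat.eq_zero_or_pos (m 0) with h1 | h1
      · rw [eq_fm m, fm_eq_iff]; omega
      · exfalso
        have hz := hQb1 (m 0 - 1)
        rw [show m 0 - 1 + 1 = m 0 by omega] at hz
        have hme : m = fm (m 0) 1 := by
          conv_lhs => rw [eq_fm m]
          rw [fm_eq_iff]; omega
        rw [← hme] at hz
        exact (MvPolynomial.mem_support_iff.mp hm) hz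
    · exfalso
      have hz := hQ2 k h0 (m 0)
      have hme : m = fm (m 0) (2*k+1) := by
        conv_lhs => rw [eq_fm m]
        rw [fm_eq_iff]; omega
      rw [← hme] at hz
      exact (MvPolynomial.mem_support_iff.mp hm) hz
  have hQeq : Q = C eps * X 1 := by
    rw [C_mul_X, single1_eq_fm]
    apply MvPolynomial.ext
    intro m
    rw [coeff_monomial]
    by_cases h : fm 0 1 = m
    · rw [if_pos h, ← h]
      exact hQ01
    · rw [if_neg h]
      by_contra hne
      exact h (hQsupp m (MvPolynomial.mem_support_iff.mpr hne)).symm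
  have hPr : ∀ m ∈ (P - C lam * X 0).support, m 0 = 0 := by
    intro m hm
    have hne := MvPolynomial.mem_support_iff.mp hm
    by_contra h0
    apply hne
    rw [coeff_sub, C_mul_X, single0_eq_fm, coeff_monomial]
    by_cases h : m = fm 1 0
    · rw [if_pos h.symm, h, hP10, sub_self]
    · rw [if_neg (fun hh => h hh.symm), sub_zero]
      by_contra hne2
      rcases hPsupp m (MvPolynomial.mem_support_iff.mpr hne2) with h' | h'
      · exact h0 h'
      · exact h h'
  obtain ⟨r, hr⟩ := exists_poly _ hPr
  exact ⟨lam, eps, r, hlam, heps, by rw [← hr]; ring, hQeq⟩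


end S15

/-- If `Jac(P,Q)` is a nonzero scalar, `P` is `α`-symmetric and `Q` is
`α`-skew-symmetric, then `f` is an automorphism. -/
theorem stmt15 {K : Type*} [Field K] [CharZero K]
    (f : MvPolynomial (Fin 2) K →ₐ[K] MvPolynomial (Fin 2) K)
    (hJac : ∃ c : K, c ≠ 0 ∧ Jac (f (X 0)) (f (X 1)) = C c)
    (hP : exch K (f (X 0)) = f (X 0))
    (hQ : exch K (f (X 1)) = - f (X 1)) :
    Function.Bijective f := by
  classical
  obtain ⟨c, hc, hJc⟩ := hJac
  set P := f (X 0) with hPdef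
  set Q := f (X 1) with hQdef
  set fh : MvPolynomial (Fin 2) K →ₐ[K] MvPolynomial (Fin 2) K := S15.TTi.comp f with hfh
  have hfh0 : fh (X 0) = S15.TTi P := rfl
  have hfh1 : fh (X 1) = S15.TTi Q := rfl
  -- parity of hatted polynomials
  have htauP : S15.tau (S15.TTi P) = S15.TTi P := by
    have := AlgHom.congr_fun (S15.tau_TTi_comm (K := K)) P
    simp only [AlgHom.comp_apply, AlgEquiv.toAlgHom_eq_coe, AlgHom.coe_coe, AlgEquiv.coe_toAlgHom] at this
    rw [this, hP]
  have htauQ : S15.tau (S15.TTi Q) = - S15.TTi Q := by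
    have := AlgHom.congr_fun (S15.tau_TTi_comm (K := K)) Q
    simp only [AlgHom.comp_apply, AlgEquiv.toAlgHom_eq_coe, AlgHom.coe_coe, AlgEquiv.coe_toAlgHom] at this
    rw [this, hQ, map_neg]
  have hPev := S15.even_of_tau_fixed htauP
  have hQod := S15.odd_of_tau_neg htauQ
  -- Jacobian of hatted pair
  have hJh : pderiv 0 (S15.TTi P) * pderiv 1 (S15.TTi Q)
      - pderiv 1 (S15.TTi P) * pderiv 0 (S15.TTi Q) = C (c * (-(2:K)⁻¹)) := by
    have h1 := S15.jac_aeval S15.gTi P Q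
    have h2 : (S15.TTi P : MvPolynomial (Fin 2) K) = aeval S15.gTi P := rfl
    have h3 : (S15.TTi Q : MvPolynomial (Fin 2) K) = aeval S15.gTi Q := rfl
    rw [h2, h3, h1, S15.jacGTi]
    rw [show pderiv 0 P * pderiv 1 Q - pderiv 1 P * pderiv 0 Q = Jac P Q from rfl, hJc]
    rw [show (aeval S15.gTi) (C c) = (C c : MvPolynomial (Fin 2) K) by
      rw [aeval_C]; rfl]
    rw [← C_mul]
  have hch : (c * (-(2:K)⁻¹)) ≠ 0 := by
    simp [hc, two_ne_zero]
  obtain ⟨lam, eps, r, hlam, heps, hPst, hQst⟩ :=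
    S15.core (S15.TTi P) (S15.TTi Q) _ hch hJh hPev hQod
  -- explicit inverse of fh
  set gh : MvPolynomial (Fin 2) K →ₐ[K] MvPolynomial (Fin 2) K :=
    aeval ![C lam⁻¹ * (X 0 - Polynomial.aeval ((C eps⁻¹ : MvPolynomial (Fin 2) K) * X 1) r),
           C eps⁻¹ * X 1] with hgh
  have hgh0 : gh (X 0)
      = C lam⁻¹ * (X 0 - Polynomial.aeval ((C eps⁻¹ : MvPolynomial (Fin 2) K) * X 1) r) := by
    rw [hgh]; simp
  have hgh1 : gh (X 1) = (C eps⁻¹ * X 1 : MvPolynomial (Fin 2) K) := by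
    rw [hgh]; simp
  have hfhQ : C eps⁻¹ * fh (X 1) = (X 1 : MvPolynomial (Fin 2) K) := by
    rw [hfh1, hQst, S15.inv_C_mul heps]
  have h1 : fh.comp gh = AlgHom.id K (MvPolynomial (Fin 2) K) := by
    apply MvPolynomial.algHom_ext
    intro i
    rcases S15.fin2_cases i with rfl | rfl <;>
      rw [AlgHom.comp_apply, AlgHom.id_apply]
    · rw [hgh0, map_mul, map_sub,
        show fh (C lam⁻¹) = (C lam⁻¹ : MvPolynomial (Fin 2) K) by
          rw [← S15.algebraMap_eq_C, AlgHom.commutes, S15.algebraMap_eq_C],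
        ← Polynomial.aeval_algHom_apply, map_mul,
        show fh (C eps⁻¹) = (C eps⁻¹ : MvPolynomial (Fin 2) K) by
          rw [← S15.algebraMap_eq_C, AlgHom.commutes, S15.algebraMap_eq_C],
        hfhQ, hfh0, hPst]
      rw [add_sub_cancel_right, S15.inv_C_mul hlam]
    · rw [hgh1, map_mul,
        show fh (C eps⁻¹) = (C eps⁻¹ : MvPolynomial (Fin 2) K) by
          rw [← S15.algebraMap_eq_C, AlgHom.commutes, S15.algebraMap_eq_C],
        hfhQ]
  have h2 : gh.comp fh = AlgHom.id K (MvPolynomial (Fin 2) K) := by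
    apply MvPolynomial.algHom_ext
    intro i
    rcases S15.fin2_cases i with rfl | rfl <;>
      rw [AlgHom.comp_apply, AlgHom.id_apply]
    · rw [hfh0, hPst, map_add, map_mul,
        show gh (C lam) = (C lam : MvPolynomial (Fin 2) K) by
          rw [← S15.algebraMap_eq_C, AlgHom.commutes, S15.algebraMap_eq_C],
        hgh0, ← Polynomial.aeval_algHom_apply, hgh1]
      rw [show C lam * (C lam⁻¹ * (X 0 - Polynomial.aeval ((C eps⁻¹ : MvPolynomial (Fin 2) K) * X 1) r))
          = C lam⁻¹ * (C lam * (X 0 - Polynomial.aeval ((C eps⁻¹ : MvPolynomial (Fin 2) K) * X 1) r)) by ring,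
        S15.inv_C_mul hlam]
      ring
    · rw [hfh1, hQst, map_mul,
        show gh (C eps) = (C eps : MvPolynomial (Fin 2) K) by
          rw [← S15.algebraMap_eq_C, AlgHom.commutes, S15.algebraMap_eq_C],
        hgh1,
        show (C eps * (C eps⁻¹ * X 1) : MvPolynomial (Fin 2) K)
          = C eps⁻¹ * (C eps * X 1) by ring,
        S15.inv_C_mul heps]
  have hbij_fh : Function.Bijective fh := S15.bij_of_comp_id fh gh h1 h2
  have hbij_TT : Function.Bijective (S15.TT : MvPolynomial (Fin 2) K →ₐ[K] MvPolynomial (Fin 2) K) :=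
    S15.bij_of_comp_id _ _ S15.TT_TTi S15.TTi_TT
  have hTf : (S15.TT : MvPolynomial (Fin 2) K →ₐ[K] MvPolynomial (Fin 2) K).comp fh = f := by
    rw [hfh, ← AlgHom.comp_assoc, S15.TT_TTi, AlgHom.id_comp]
  have : ⇑f = ⇑(S15.TT : MvPolynomial (Fin 2) K →ₐ[K] MvPolynomial (Fin 2) K) ∘ ⇑fh := by
    rw [← hTf]; rfl
  rw [this]
  exact hbij_TT.comp hbij_fh
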